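/- arXiv:1408.5652 — 7 statements merged into one kernel-verified Lean document; each statement's English description precedes it below -/
import Mathlib

section
/- For every positive integer j and nonnegative integer m, the double sequence A_{j,m} defined by A_{-1,0}=1, A_{-1,m}=0 for m≥1, A_{j,-1}=0 for j≥0, and A_{j,m} = j·A_{j,m-1} + A_{j-1,m} for j,m ≥ 0, satisfies the closed formula A_{j,m} = Σ_{r=1}^{j} (-1)^{j-r} r^{m+j} / (r! (j-r)!). -/
/-- Auxiliary sum: `Bsum j e = ∑_{r=0}^{j} (-1)^{j-r} r^e / (r! (j-r)!)`. -/
noncomputable def Bsum (j e : ℕ) : ℚ :=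
  ∑ r ∈ Finset.range (j + 1),
    (-1 : ℚ) ^ (j - r) * (r : ℚ) ^ e / ((r.factorial : ℚ) * ((j - r).factorial : ℚ))

lemma Bsum_rec (j e : ℕ) :
    Bsum (j + 1) (e + 1) = ((j : ℚ) + 1) * Bsum (j + 1) e + Bsum j e := by
  have h : Bsum (j + 1) (e + 1) - ((j : ℚ) + 1) * Bsum (j + 1) e = Bsum j e := by
    unfold Bsum
    rw [Finset.mul_sum, ← Finset.sum_sub_distrib, Finset.sum_range_succ]
    have hlast : (-1 : ℚ) ^ (j + 1 - (j + 1)) * ((j + 1 : ℕ) : ℚ) ^ (e + 1) /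
          (((j + 1).factorial : ℚ) * ((j + 1 - (j + 1)).factorial : ℚ)) -
        ((j : ℚ) + 1) * ((-1 : ℚ) ^ (j + 1 - (j + 1)) * ((j + 1 : ℕ) : ℚ) ^ e /
          (((j + 1).factorial : ℚ) * ((j + 1 - (j + 1)).factorial : ℚ))) = 0 := by
      simp only [Nat.sub_self, pow_zero, Nat.factorial_zero, Nat.cast_one, mul_one, one_mul,
        pow_succ, Nat.cast_add, Nat.cast_one]
      ring
    rw [hlast, add_zero]
    apply Finset.sum_congr rfl
    intro r hr
    rw [Finset.mem_range] at hr
    have hr' : r ≤ j := Nat.lt_succ_iff.mp hr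
    obtain ⟨a, rfl⟩ : ∃ a, j = r + a := ⟨j - r, (Nat.add_sub_cancel' hr').symm⟩
    have e1 : r + a - r = a := by omega
    have e2 : r + a + 1 - r = a + 1 := by omega
    rw [e1, e2, Nat.factorial_succ, pow_succ, pow_succ]
    have hfr : (r.factorial : ℚ) ≠ 0 := Nat.cast_ne_zero.mpr r.factorial_ne_zero
    have hfa : (a.factorial : ℚ) ≠ 0 := Nat.cast_ne_zero.mpr a.factorial_ne_zero
    have ha1 : ((a : ℚ) + 1) ≠ 0 := by positivity
    push_cast
    field_simp
    ring
  linarith [h]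

lemma Bsum_zero_exp (j : ℕ) (hj : 1 ≤ j) : Bsum j 0 = 0 := by
  unfold Bsum
  have hcongr : ∀ r ∈ Finset.range (j + 1),
      (-1 : ℚ) ^ (j - r) * (r : ℚ) ^ 0 / ((r.factorial : ℚ) * ((j - r).factorial : ℚ)) =
      (-1 : ℚ) ^ j / (j.factorial : ℚ) * ((-1 : ℚ) ^ r * (j.choose r : ℚ)) := by
    intro r hr
    rw [Finset.mem_range] at hr
    have hr' : r ≤ j := Nat.lt_succ_iff.mp hr
    obtain ⟨a, rfl⟩ : ∃ a, j = r + a := ⟨j - r, (Nat.add_sub_cancel' hr').symm⟩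
    have e1 : r + a - r = a := by omega
    rw [e1]
    have hcnat := Nat.choose_mul_factorial_mul_factorial hr'
    rw [e1] at hcnat
    have hc : ((r + a).choose r : ℚ) * (r.factorial : ℚ) * (a.factorial : ℚ)
        = ((r + a).factorial : ℚ) := by exact_mod_cast congrArg (fun n : ℕ => (n : ℚ)) hcnat
    have hsign : (-1 : ℚ) ^ (r + a) * (-1 : ℚ) ^ r = (-1 : ℚ) ^ a := by
      rw [← pow_add, show r + a + r = 2 * r + a by ring, pow_add, pow_mul]
      norm_num
    have hfr : (r.factorial : ℚ) ≠ 0 := Nat.cast_ne_zero.mpr r.factorial_ne_zero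
    have hfa : (a.factorial : ℚ) ≠ 0 := Nat.cast_ne_zero.mpr a.factorial_ne_zero
    have hfra : ((r + a).factorial : ℚ) ≠ 0 := Nat.cast_ne_zero.mpr (r + a).factorial_ne_zero
    rw [pow_zero, mul_one]
    field_simp
    linear_combination (-((r + a).factorial : ℚ)) * hsign -
      ((-1 : ℚ) ^ (r + a) * (-1 : ℚ) ^ r) * hc
  rw [Finset.sum_congr rfl hcongr, ← Finset.mul_sum]
  have : ∑ r ∈ Finset.range (j + 1), (-1 : ℚ) ^ r * (j.choose r : ℚ) = 0 := by
    have := Int.alternating_sum_range_choose_of_ne (by omega : j ≠ 0)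
    exact_mod_cast congrArg (fun z : ℤ => (z : ℚ)) this
  rw [this, mul_zero]

lemma Bsum_eq_zero : ∀ j e : ℕ, e < j → Bsum j e = 0 := by
  intro j
  induction j with
  | zero => intro e he; omega
  | succ j ih =>
    intro e
    induction e with
    | zero => intro _; exact Bsum_zero_exp (j + 1) (by omega)
    | succ e ihe =>
      intro he
      rw [Bsum_rec, ihe (by omega), ih e (by omega)]
      ring

lemma Bsum_zero_left (e : ℕ) : Bsum 0 e = (0 : ℚ) ^ e := by
  simp [Bsum]

/-- closed formula for the double sequence `A`. -/
theorem stmt0 (A : ℤ → ℤ → ℚ)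
    (h1 : A (-1) 0 = 1)
    (h2 : ∀ m : ℤ, 1 ≤ m → A (-1) m = 0)
    (h3 : ∀ j : ℤ, 0 ≤ j → A j (-1) = 0)
    (h4 : ∀ j m : ℤ, 0 ≤ j → 0 ≤ m → A j m = j * A j (m - 1) + A (j - 1) m)
    (j m : ℕ) (hj : 1 ≤ j) :
    A j m = ∑ r ∈ Finset.Icc 1 j,
      (-1 : ℚ) ^ (j - r) * (r : ℚ) ^ (m + j) / ((r.factorial : ℚ) * ((j - r).factorial : ℚ)) := by
  have key : ∀ j m : ℕ, A j m = Bsum j (m + j) := by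
    intro j
    induction j with
    | zero =>
      intro m
      cases m with
      | zero =>
        have h := h4 0 0 le_rfl le_rfl
        norm_num at h
        rw [h1] at h
        simpa [Bsum_zero_left] using h
      | succ m =>
        have h := h4 0 ((m : ℤ) + 1) le_rfl (by omega)
        norm_num at h
        rw [h2 ((m : ℤ) + 1) (by omega)] at h
        simpa [Bsum_zero_left] using h
    | succ j ih =>
      intro m
      induction m with
      | zero =>
        have h := h4 ((j : ℤ) + 1) 0 (by omega) le_rfl
        have h3' := h3 ((j : ℤ) + 1) (by omega)
        push_cast at h h3' ⊢
        rw [h3'] at h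
        simp only [add_sub_cancel_right] at h
        have hA := ih 0
        push_cast at hA
        rw [hA] at h
        have hB : Bsum (j + 1) (0 + (j + 1)) = Bsum j (0 + j) := by
          rw [show 0 + (j + 1) = j + 1 by omega, show (j + 1 : ℕ) = j + 1 from rfl]
          rw [Bsum_rec j j, Bsum_eq_zero (j + 1) j (by omega)]
          rw [show 0 + j = j by omega]
          ring
        rw [hB]
        linarith [h]
      | succ m ihm =>
        have h := h4 ((j : ℤ) + 1) ((m : ℤ) + 1) (by omega) (by omega)
        push_cast at h ⊢
        simp only [add_sub_cancel_right] at h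
        have hA1 := ih (m + 1)
        push_cast at hA1
        push_cast at ihm
        rw [hA1, ihm] at h
        have hB : Bsum (j + 1) (m + 1 + (j + 1)) =
            ((j : ℚ) + 1) * Bsum (j + 1) (m + (j + 1)) + Bsum j (m + 1 + j) := by
          rw [show m + 1 + (j + 1) = (m + (j + 1)) + 1 by omega, Bsum_rec,
            show m + 1 + j = m + (j + 1) by omega]
        rw [hB]
        linarith [h]
  rw [key j m]
  unfold Bsum
  symm
  apply Finset.sum_subset
  · intro x hx
    rw [Finset.mem_Icc] at hx
    rw [Finset.mem_range]
    omega
  · intro x hx hnx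
    rw [Finset.mem_range] at hx
    rw [Finset.mem_Icc] at hnx
    have hx0 : x = 0 := by omega
    subst hx0
    simp [zero_pow (by omega : m + j ≠ 0)]
end

section
/- Let Λ = (Λ_0, Λ_1, Λ_2, ...) be a sequence of complex numbers. Define U_{k,j}(Λ) for k,j ≥ -1 by U_{-1,-1}=1, U_{k,-1}=U_{-1,j}=0 for k,j≥0, and U_{k,j} = -(Λ_j + k - 1)·U_{k-1,j} + U_{k-1,j-1} for k,j ≥ 0. Define V_{k,j}(Λ) by V_{k,j}=0 if j>k and V_{k,j} = Σ_{m=0}^{k-j} A_{j,k-j-m}·σ_{k-1,m}(Λ) if k ≥ j, where σ_{k,m}(Λ) is the elementary symmetric polynomial in Λ_0,...,Λ_k of degree m (with σ_{-1,0}=1, σ_{k,-1}=σ_{-1,m}=0 for m≥1) and A_{j,m} is as in Definition (A). Then for all k ≥ 0 and j ≥ -1 with k ≥ j, Σ_{ℓ=j}^{k} U_{k,ℓ}(Λ)·V_{ℓ,j}(Λ) = δ_{k,j} (Kronecker delta). -/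
/-- orthogonality `∑_{ℓ=j}^{k} U_{k,ℓ} V_{ℓ,j} = δ_{k,j}`. -/
theorem stmt2 (Λ : ℤ → ℂ) (A U σ V : ℤ → ℤ → ℂ)
    (hA1 : A (-1) 0 = 1)
    (hA2 : ∀ m : ℤ, 1 ≤ m → A (-1) m = 0)
    (hA3 : ∀ j : ℤ, 0 ≤ j → A j (-1) = 0)
    (hA4 : ∀ j m : ℤ, 0 ≤ j → 0 ≤ m → A j m = j * A j (m - 1) + A (j - 1) m)
    (hU1 : U (-1) (-1) = 1)
    (hU2 : ∀ k : ℤ, 0 ≤ k → U k (-1) = 0)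
    (hU3 : ∀ j : ℤ, 0 ≤ j → U (-1) j = 0)
    (hU4 : ∀ k j : ℤ, 0 ≤ k → 0 ≤ j →
      U k j = -(Λ j + k - 1) * U (k - 1) j + U (k - 1) (j - 1))
    (hσ1 : σ (-1) 0 = 1)
    (hσ2 : ∀ k : ℤ, -1 ≤ k → σ k (-1) = 0)
    (hσ3 : ∀ m : ℤ, 1 ≤ m → σ (-1) m = 0)
    (hσ4 : ∀ k m : ℤ, 0 ≤ k → 0 ≤ m → σ k m = Λ k * σ (k - 1) (m - 1) + σ (k - 1) m)
    (hV1 : ∀ k j : ℤ, k < j → V k j = 0)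
    (hV2 : ∀ k j : ℤ, 0 ≤ k → -1 ≤ j → j ≤ k →
      V k j = ∑ m ∈ Finset.Icc 0 (k - j), A j (k - j - m) * σ (k - 1) m)
    (k j : ℤ) (hk : 0 ≤ k) (hj : -1 ≤ j) (hjk : j ≤ k) :
    ∑ l ∈ Finset.Icc j k, U k l * V l j = if k = j then 1 else 0 := by
  -- A j 0 = 1
  have hA0 : ∀ j : ℤ, -1 ≤ j → A j 0 = 1 := by
    refine Int.le_induction hA1 ?_
    intro n hn ih
    rw [hA4 (n+1) 0 (by omega) le_rfl]
    have e1 : (0:ℤ) - 1 = -1 := by norm_num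
    have e2 : (n:ℤ) + 1 - 1 = n := by ring
    rw [e1, e2, hA3 (n+1) (by omega), ih]
    ring
  -- σ k 0 = 1
  have hσ0 : ∀ k : ℤ, -1 ≤ k → σ k 0 = 1 := by
    refine Int.le_induction hσ1 ?_
    intro n hn ih
    rw [hσ4 (n+1) 0 (by omega) le_rfl]
    have e1 : (0:ℤ) - 1 = -1 := by norm_num
    have e2 : (n:ℤ) + 1 - 1 = n := by ring
    rw [e1, e2, hσ2 n (by omega), ih]
    ring
  -- σ k m = 0 for m ≥ k + 2
  have hσz : ∀ k : ℤ, -1 ≤ k → ∀ m : ℤ, k + 2 ≤ m → σ k m = 0 := by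
    refine Int.le_induction ?_ ?_
    · intro m hm; exact hσ3 m (by omega)
    · intro n hn ih m hm
      rw [hσ4 (n+1) m (by omega) (by omega)]
      have e2 : (n:ℤ) + 1 - 1 = n := by ring
      rw [e2, ih (m-1) (by omega), ih m (by omega)]
      ring
  -- U is lower triangular
  have hUtri : ∀ k : ℤ, -1 ≤ k → ∀ j : ℤ, k < j → U k j = 0 := by
    refine Int.le_induction ?_ ?_
    · intro j hj; exact hU3 j (by omega)
    · intro n hn ih j hj
      rw [hU4 (n+1) j (by omega) (by omega)]
      have e2 : (n:ℤ) + 1 - 1 = n := by ring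
      rw [e2, ih j (by omega), ih (j-1) (by omega)]
      ring
  -- U has unit diagonal
  have hUdiag : ∀ k : ℤ, -1 ≤ k → U k k = 1 := by
    refine Int.le_induction hU1 ?_
    intro n hn ih
    rw [hU4 (n+1) (n+1) (by omega) (by omega)]
    have e2 : (n:ℤ) + 1 - 1 = n := by ring
    rw [e2, hUtri n (by omega) (n+1) (by omega), ih]
    ring
  -- V has unit diagonal
  have hVdiag : ∀ k : ℤ, 0 ≤ k → V k k = 1 := by
    intro k hk
    rw [hV2 k k hk (by omega) le_rfl]
    have h1 : (k:ℤ) - k = 0 := by ring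
    rw [h1, Finset.Icc_self, Finset.sum_singleton]
    have h2 : (0:ℤ) - 0 = 0 := by ring
    rw [h2, hA0 k (by omega), hσ0 (k-1) (by omega)]
    ring
  -- V l (-1) = 0 for l ≥ 0
  have hVneg : ∀ l : ℤ, 0 ≤ l → V l (-1) = 0 := by
    intro l hl
    rw [hV2 l (-1) hl (by omega) (by omega)]
    apply Finset.sum_eq_zero
    intro m hm
    simp only [Finset.mem_Icc] at hm
    rcases lt_or_ge m (l+1) with h | h
    · rw [hA2 (l - -1 - m) (by omega)]; ring
    · have hm' : m = l + 1 := by omega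
      rw [hσz (l-1) (by omega) m (by omega)]; ring
  -- key recurrence for V in the first index
  have hVrec : ∀ l j : ℤ, 0 ≤ j → j ≤ l → V (l+1) j = (Λ l + j) * V l j + V l (j-1) := by
    intro l j hj hjl
    have hl : (0:ℤ) ≤ l := le_trans hj hjl
    set N : ℤ := l + 1 - j with hN
    have hNpos : 1 ≤ N := by omega
    rw [hV2 (l+1) j (by omega) (by omega) (by omega)]
    have hidx : (l:ℤ) + 1 - j = N := rfl
    have hidx2 : (l:ℤ) + 1 - 1 = l := by ring
    rw [hidx, hidx2]
    have step1 : ∀ m ∈ Finset.Icc (0:ℤ) N, A j (N - m) * σ l m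
        = Λ l * (A j (N - m) * σ (l-1) (m-1)) + A j (N - m) * σ (l-1) m := by
      intro m hm
      simp only [Finset.mem_Icc] at hm
      rw [hσ4 l m hl hm.1]
      ring
    rw [Finset.sum_congr rfl step1, Finset.sum_add_distrib, ← Finset.mul_sum]
    -- first sum: shift index
    have S1 : ∑ m ∈ Finset.Icc (0:ℤ) N, A j (N - m) * σ (l-1) (m-1)
        = ∑ m ∈ Finset.Icc (-1:ℤ) (N-1), A j (N - 1 - m) * σ (l-1) m := by
      refine Finset.sum_nbij' (fun i => i - 1) (fun i => i + 1) ?_ ?_ ?_ ?_ ?_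
      · intro a ha; simp only [Finset.mem_Icc] at *; omega
      · intro a ha; simp only [Finset.mem_Icc] at *; omega
      · intro a ha; omega
      · intro a ha; omega
      · intro a ha
        have h2 : N - 1 - (a - 1) = N - a := by ring
        rw [h2]
    have insm : Finset.Icc (-1:ℤ) (N-1) = insert (-1) (Finset.Icc 0 (N-1)) := by
      ext x; simp; omega
    have hnm : (-1:ℤ) ∉ Finset.Icc (0:ℤ) (N-1) := by simp
    have S1' : ∑ m ∈ Finset.Icc (-1:ℤ) (N-1), A j (N - 1 - m) * σ (l-1) m = V l j := by
      rw [insm, Finset.sum_insert hnm, hσ2 (l-1) (by omega), mul_zero, zero_add]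
      rw [hV2 l j hl (by omega) hjl]
      have : (l:ℤ) - j = N - 1 := by omega
      rw [this]
    -- second sum: A recurrence
    have step2 : ∀ m ∈ Finset.Icc (0:ℤ) N, A j (N - m) * σ (l-1) m
        = (j:ℂ) * (A j (N - 1 - m) * σ (l-1) m) + A (j-1) (N - m) * σ (l-1) m := by
      intro m hm
      simp only [Finset.mem_Icc] at hm
      rw [hA4 j (N - m) hj (by omega)]
      have : N - m - 1 = N - 1 - m := by ring
      rw [this]
      push_cast
      ring
    have S2a : ∑ m ∈ Finset.Icc (0:ℤ) N, A j (N - 1 - m) * σ (l-1) m = V l j := by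
      have insN : Finset.Icc (0:ℤ) N = insert N (Finset.Icc 0 (N-1)) := by
        ext x; simp; omega
      have hnm2 : N ∉ Finset.Icc (0:ℤ) (N-1) := by simp
      rw [insN, Finset.sum_insert hnm2]
      have : N - 1 - N = -1 := by ring
      rw [this, hA3 j hj, zero_mul, zero_add]
      rw [hV2 l j hl (by omega) hjl]
      have : (l:ℤ) - j = N - 1 := by omega
      rw [this]
    have S2b : ∑ m ∈ Finset.Icc (0:ℤ) N, A (j-1) (N - m) * σ (l-1) m = V l (j-1) := by
      rw [hV2 l (j-1) hl (by omega) (by omega)]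
      have : (l:ℤ) - (j-1) = N := by omega
      rw [this]
    rw [S1, S1', Finset.sum_congr rfl step2, Finset.sum_add_distrib, ← Finset.mul_sum,
      S2a, S2b]
    ring
  -- main induction
  have main : ∀ k : ℤ, 0 ≤ k → ∀ j : ℤ, -1 ≤ j → j ≤ k →
      ∑ l ∈ Finset.Icc j k, U k l * V l j = if k = j then 1 else 0 := by
    refine Int.le_induction ?_ ?_
    · intro j hj hjk
      have hcases : j = -1 ∨ j = 0 := by omega
      rcases hcases with rfl | rfl
      · have e : Finset.Icc (-1:ℤ) 0 = {-1, 0} := by ext x; simp; omega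
        rw [e, Finset.sum_pair (by norm_num), hU2 0 le_rfl, hVneg 0 le_rfl]
        norm_num
      · rw [Finset.Icc_self, Finset.sum_singleton, hUdiag 0 (by omega), hVdiag 0 le_rfl]
        norm_num
    · intro k hk ih j hj hjk
      rcases eq_or_lt_of_le hjk with rfl | hjk'
      · rw [Finset.Icc_self, Finset.sum_singleton, hUdiag _ (by omega), hVdiag _ (by omega)]
        norm_num
      rcases eq_or_lt_of_le hj with rfl | hj0
      · -- j = -1 case : every term vanishes
        rw [if_neg (by omega)]
        apply Finset.sum_eq_zero
        intro l hl
        simp only [Finset.mem_Icc] at hl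
        rcases eq_or_lt_of_le hl.1 with rfl | hl0
        · rw [hU2 (k+1) (by omega)]; ring
        · rw [hVneg l (by omega)]; ring
      have hj0' : (0:ℤ) ≤ j := by omega
      have hjk0 : j ≤ k := by omega
      -- expand U via its recurrence
      have step1 : ∀ l ∈ Finset.Icc j (k+1), U (k+1) l * V l j
          = (-(Λ l + k) * U k l) * V l j + U k (l-1) * V l j := by
        intro l hl
        simp only [Finset.mem_Icc] at hl
        rw [hU4 (k+1) l (by omega) (by omega)]
        have h1 : (k:ℤ)+1-1 = k := by ring
        rw [h1]
        push_cast
        ring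
      rw [Finset.sum_congr rfl step1, Finset.sum_add_distrib]
      have insTop : Finset.Icc j (k+1) = insert (k+1) (Finset.Icc j k) := by
        ext x; simp; omega
      have hnmTop : (k+1) ∉ Finset.Icc j k := by simp
      -- first part
      have SA : ∑ l ∈ Finset.Icc j (k+1), (-(Λ l + k) * U k l) * V l j
          = ∑ l ∈ Finset.Icc j k, (-(Λ l + k) * U k l) * V l j := by
        rw [insTop, Finset.sum_insert hnmTop, hUtri k (by omega) (k+1) (by omega),
          mul_zero, zero_mul, zero_add]
      -- second part : reindex
      have SB : ∑ l ∈ Finset.Icc j (k+1), U k (l-1) * V l j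
          = ∑ l ∈ Finset.Icc (j-1) k, U k l * V (l+1) j := by
        refine Finset.sum_nbij' (fun i => i - 1) (fun i => i + 1) ?_ ?_ ?_ ?_ ?_
        · intro a ha; simp only [Finset.mem_Icc] at *; omega
        · intro a ha; simp only [Finset.mem_Icc] at *; omega
        · intro a ha; omega
        · intro a ha; omega
        · intro a ha
          have h2 : a - 1 + 1 = a := by ring
          rw [h2]
      have insBot : Finset.Icc (j-1) k = insert (j-1) (Finset.Icc j k) := by
        ext x; simp; omega
      have hnmBot : (j-1) ∉ Finset.Icc j k := by simp
      have SB2 : ∑ l ∈ Finset.Icc (j-1) k, U k l * V (l+1) j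
          = U k (j-1) + ∑ l ∈ Finset.Icc j k, U k l * ((Λ l + j) * V l j + V l (j-1)) := by
        rw [insBot, Finset.sum_insert hnmBot]
        have h1 : (j:ℤ)-1+1 = j := by ring
        rw [h1, hVdiag j hj0', mul_one]
        congr 1
        apply Finset.sum_congr rfl
        intro l hl
        simp only [Finset.mem_Icc] at hl
        rw [hVrec l j hj0' hl.1]
      rw [SA, SB, SB2]
      -- combine the two sums over Icc j k
      have C1 : (∑ l ∈ Finset.Icc j k, (-(Λ l + k) * U k l) * V l j)
          + ∑ l ∈ Finset.Icc j k, U k l * ((Λ l + j) * V l j + V l (j-1))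
          = ((j:ℂ) - k) * (∑ l ∈ Finset.Icc j k, U k l * V l j)
            + ∑ l ∈ Finset.Icc j k, U k l * V l (j-1) := by
        rw [← Finset.sum_add_distrib, Finset.mul_sum, ← Finset.sum_add_distrib]
        exact Finset.sum_congr rfl (fun l _ => by ring)
      have D1 : ∑ l ∈ Finset.Icc j k, U k l * V l j = if k = j then 1 else 0 :=
        ih j (by omega) (by omega)
      have hterm : U k (j-1) * V (j-1) (j-1) = U k (j-1) := by
        rcases eq_or_lt_of_le hj0' with rfl | hj1
        · have e : (0:ℤ) - 1 = -1 := by norm_num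
          rw [e, hU2 k hk]; ring
        · rw [hVdiag (j-1) (by omega)]; ring
      have D2 : U k (j-1) + ∑ l ∈ Finset.Icc j k, U k l * V l (j-1) = 0 := by
        have D2' := ih (j-1) (by omega) (by omega)
        rw [if_neg (by omega), insBot, Finset.sum_insert hnmBot, hterm] at D2'
        exact D2'
      rw [if_neg (show k + 1 ≠ j by omega)]
      rcases eq_or_ne k j with rfl | hne
      · rw [if_pos rfl] at D1
        linear_combination C1 + D2
      · rw [if_neg hne] at D1
        linear_combination C1 + D2 + ((j:ℂ) - (k:ℂ)) * D1
  exact main k hk j hj hjk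
end

section
/- With V_{k,j}(Λ) defined as V_{k,j}=0 for j>k and V_{k,j}(Λ) = Σ_{m=0}^{k-j} A_{j,k-j-m}·σ_{k-1,m}(Λ) for k ≥ j, the recurrence V_{k,j}(Λ) = (Λ_{k-1} + j)·V_{k-1,j}(Λ) + V_{k-1,j-1}(Λ) holds for all k ≥ 1, j ≥ 0. -/
/-- Auxiliary: sums over integer intervals `Icc 0 (N-1)` agree with sums over `range N`. -/
lemma stmt4_sumIcc (f : ℤ → ℂ) (N : ℕ) :
    ∑ m ∈ Finset.Icc (0:ℤ) ((N:ℤ)-1), f m = ∑ i ∈ Finset.range N, f (i:ℤ) := by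
  induction N with
  | zero => simp
  | succ n ih =>
    have hins : Finset.Icc (0:ℤ) (((n+1:ℕ):ℤ)-1) = insert (n:ℤ) (Finset.Icc 0 ((n:ℤ)-1)) := by
      ext x; simp; omega
    rw [hins, Finset.sum_insert (by simp), Finset.sum_range_succ, ih]
    ring

/-- recurrence `V_{k,j} = (Λ_{k-1} + j) V_{k-1,j} + V_{k-1,j-1}`. -/
theorem stmt4 (Λ : ℤ → ℂ) (A σ V : ℤ → ℤ → ℂ)
    (hA1 : A (-1) 0 = 1)
    (hA2 : ∀ m : ℤ, 1 ≤ m → A (-1) m = 0)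
    (hA3 : ∀ j : ℤ, 0 ≤ j → A j (-1) = 0)
    (hA4 : ∀ j m : ℤ, 0 ≤ j → 0 ≤ m → A j m = j * A j (m - 1) + A (j - 1) m)
    (hσ1 : σ (-1) 0 = 1)
    (hσ2 : ∀ k : ℤ, -1 ≤ k → σ k (-1) = 0)
    (hσ3 : ∀ m : ℤ, 1 ≤ m → σ (-1) m = 0)
    (hσ4 : ∀ k m : ℤ, 0 ≤ k → 0 ≤ m → σ k m = Λ k * σ (k - 1) (m - 1) + σ (k - 1) m)
    (hV1 : ∀ k j : ℤ, k < j → V k j = 0)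
    (hV2 : ∀ k j : ℤ, 0 ≤ k → -1 ≤ j → j ≤ k →
      V k j = ∑ m ∈ Finset.Icc 0 (k - j), A j (k - j - m) * σ (k - 1) m)
    (k j : ℤ) (hk : 1 ≤ k) (hj : 0 ≤ j) :
    V k j = (Λ (k - 1) + j) * V (k - 1) j + V (k - 1) (j - 1) := by
  rcases lt_or_ge k j with hlt | hle
  · -- all three terms vanish
    rw [hV1 k j hlt, hV1 (k-1) j (by omega), hV1 (k-1) (j-1) (by omega)]
    ring
  · -- j ≤ k : expand via hV2
    obtain ⟨N, hN⟩ : ∃ N : ℕ, (N : ℤ) = k - j := ⟨(k - j).toNat, by omega⟩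
    -- V k j as a range sum
    have e1 : V k j = ∑ i ∈ Finset.range (N+1), A j ((N:ℤ) - i) * σ (k-1) i := by
      rw [hV2 k j (by omega) (by omega) hle]
      have : k - j = ((N+1:ℕ):ℤ) - 1 := by push_cast; omega
      rw [this, stmt4_sumIcc (fun m => A j (((N+1:ℕ):ℤ) - 1 - m) * σ (k-1) m) (N+1)]
      apply Finset.sum_congr rfl
      intro i _
      congr 2
      push_cast; ring
    -- V (k-1) j as a range sum
    have e2 : V (k-1) j = ∑ i ∈ Finset.range N, A j ((N:ℤ) - 1 - i) * σ (k-2) i := by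
      rcases eq_or_lt_of_le hle with heq | hlt'
      · -- j = k : N = 0, both sides are 0
        have hN0 : N = 0 := by omega
        subst hN0
        rw [hV1 (k-1) j (by omega)]
        simp
      · rw [hV2 (k-1) j (by omega) (by omega) (by omega)]
        have : k - 1 - j = (N:ℤ) - 1 := by omega
        rw [this, stmt4_sumIcc (fun m => A j ((N:ℤ) - 1 - m) * σ (k-1-1) m) N]
        apply Finset.sum_congr rfl
        intro i _
        congr 2
        omega
    -- V (k-1) (j-1) as a range sum
    have e3 : V (k-1) (j-1) = ∑ i ∈ Finset.range (N+1), A (j-1) ((N:ℤ) - i) * σ (k-2) i := by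
      rw [hV2 (k-1) (j-1) (by omega) (by omega) (by omega)]
      have : k - 1 - (j-1) = ((N+1:ℕ):ℤ) - 1 := by push_cast; omega
      rw [this, stmt4_sumIcc (fun m => A (j-1) (((N+1:ℕ):ℤ) - 1 - m) * σ (k-1-1) m) (N+1)]
      apply Finset.sum_congr rfl
      intro i _
      congr 2
      · push_cast; ring
      · omega
    rw [e1, e2, e3]
    -- expand σ (k-1) i
    have step1 : ∑ i ∈ Finset.range (N+1), A j ((N:ℤ) - i) * σ (k-1) i
        = Λ (k-1) * (∑ i ∈ Finset.range (N+1), A j ((N:ℤ) - i) * σ (k-2) ((i:ℤ)-1))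
          + ∑ i ∈ Finset.range (N+1), A j ((N:ℤ) - i) * σ (k-2) i := by
      rw [Finset.mul_sum, ← Finset.sum_add_distrib]
      apply Finset.sum_congr rfl
      intro i _
      rw [hσ4 (k-1) i (by omega) (by positivity)]
      have : k - 1 - 1 = k - 2 := by ring
      rw [this]; ring
    -- first inner sum: shift index, using σ (k-2) (-1) = 0
    have step2 : ∑ i ∈ Finset.range (N+1), A j ((N:ℤ) - i) * σ (k-2) ((i:ℤ)-1)
        = ∑ i ∈ Finset.range N, A j ((N:ℤ) - 1 - i) * σ (k-2) i := by
      rw [Finset.sum_range_succ']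
      have h0 : σ (k-2) (((0:ℕ):ℤ) - 1) = 0 := by
        have := hσ2 (k-2) (by omega); simpa using this
      rw [h0, mul_zero, add_zero]
      apply Finset.sum_congr rfl
      intro i _
      congr 2 <;> push_cast <;> ring
    -- second inner sum: expand A via hA4
    have step3 : ∑ i ∈ Finset.range (N+1), A j ((N:ℤ) - i) * σ (k-2) i
        = j * (∑ i ∈ Finset.range N, A j ((N:ℤ) - 1 - i) * σ (k-2) i)
          + ∑ i ∈ Finset.range (N+1), A (j-1) ((N:ℤ) - i) * σ (k-2) i := by
      have expand : ∀ i ∈ Finset.range (N+1),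
          A j ((N:ℤ) - i) * σ (k-2) i
          = j * (A j ((N:ℤ) - i - 1) * σ (k-2) i) + A (j-1) ((N:ℤ) - i) * σ (k-2) i := by
        intro i hi
        rw [Finset.mem_range] at hi
        rw [hA4 j ((N:ℤ) - i) hj (by omega)]
        ring
      rw [Finset.sum_congr rfl expand, Finset.sum_add_distrib, ← Finset.mul_sum]
      congr 1
      congr 1
      rw [Finset.sum_range_succ]
      have hlast : A j ((N:ℤ) - (N:ℤ) - 1) * σ (k-2) (N:ℤ) = 0 := by
        have : (N:ℤ) - (N:ℤ) - 1 = -1 := by ring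
        rw [this, hA3 j hj, zero_mul]
      rw [hlast, add_zero]
      apply Finset.sum_congr rfl
      intro i _
      congr 2
      ring
    rw [step1, step2, step3]
    ring
end

section
/- For α a positive integer and a a complex number, the α-th derivative of the function t ↦ e^{a/t} (for t > 0, or t in ℂ \ {0}) is given by d^α/dt^α (e^{a/t}) = (-1)^α Σ_{β=1}^{α} [α!(α-1)! / ((α-β)! β! (β-1)!)] · a^β · t^{-α-β} · e^{a/t}. -/
open Finset

noncomputable def cc (α β : ℕ) : ℂ :=
  (α.factorial : ℂ) * ((α - 1).factorial : ℂ) /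
    (((α - β).factorial : ℂ) * (β.factorial : ℂ) * ((β - 1).factorial : ℂ))

noncomputable def FF (a : ℂ) (α : ℕ) (t : ℂ) : ℂ :=
  (-1 : ℂ) ^ α * ∑ β ∈ Finset.Icc 1 α,
    cc α β * a ^ β * t ^ (-(α : ℤ) - (β : ℤ)) * Complex.exp (a / t)

lemma hasDerivAt_aux (a t : ℂ) (ht : t ≠ 0) :
    HasDerivAt (fun z : ℂ => Complex.exp (a / z))
      (Complex.exp (a / t) * (-(a / t ^ 2))) t := by
  have h1 : HasDerivAt (fun z : ℂ => a / z) (-(a / t ^ 2)) t := by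
    simpa [div_eq_mul_inv, mul_comm, neg_div] using (hasDerivAt_inv ht).const_mul a
  exact h1.cexp

lemma hasDerivAt_term (a t : ℂ) (ht : t ≠ 0) (m : ℤ) :
    HasDerivAt (fun z : ℂ => z ^ m * Complex.exp (a / z))
      ((m : ℂ) * t ^ (m - 1) * Complex.exp (a / t) +
        t ^ m * (Complex.exp (a / t) * (-(a / t ^ 2)))) t :=
  (hasDerivAt_zpow m t (Or.inl ht)).mul (hasDerivAt_aux a t ht)

lemma fac_ne (n : ℕ) : (n.factorial : ℂ) ≠ 0 := by
  exact_mod_cast Nat.factorial_ne_zero n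

lemma cc_one (α : ℕ) : cc α 1 = (α.factorial : ℂ) := by
  rw [cc]
  simp
  exact mul_div_cancel_right₀ _ (fac_ne _)

lemma cc_diag (α : ℕ) : cc α α = 1 := by
  rw [cc, Nat.sub_self]
  simp
  exact ⟨Nat.factorial_ne_zero _, Nat.factorial_ne_zero _⟩

lemma cc_rec (α β : ℕ) (h2 : 2 ≤ β) (hβα : β ≤ α) :
    ((α : ℂ) + (β : ℂ)) * cc α β + cc α (β - 1) = cc (α + 1) β := by
  obtain ⟨γ, rfl⟩ : ∃ γ, β = γ + 2 := ⟨β - 2, by omega⟩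
  obtain ⟨δ, rfl⟩ : ∃ δ, α = δ + (γ + 2) := ⟨α - (γ + 2), by omega⟩
  simp only [cc]
  have e1 : δ + (γ + 2) - (γ + 2) = δ := by omega
  have e2 : γ + 2 - 1 = γ + 1 := by omega
  have e3 : δ + (γ + 2) - (γ + 1) = δ + 1 := by omega
  have e4 : γ + 1 - 1 = γ := by omega
  have e5 : δ + (γ + 2) - 1 = δ + γ + 1 := by omega
  have e6 : δ + (γ + 2) + 1 - (γ + 2) = δ + 1 := by omega
  have e7 : δ + (γ + 2) + 1 - 1 = δ + γ + 2 := by omega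
  rw [e1, e2, e3, e4, e5, e6, e7]
  have f1 : ((δ + (γ + 2)).factorial : ℂ) = (δ + γ + 2) * (δ + γ + 1).factorial := by
    have : δ + (γ + 2) = (δ + γ + 1) + 1 := by omega
    rw [this, Nat.factorial_succ]; push_cast; ring
  have f2 : ((δ + (γ + 2) + 1).factorial : ℂ) = (δ + γ + 3) * ((δ + γ + 2) * (δ + γ + 1).factorial) := by
    have : δ + (γ + 2) + 1 = (δ + γ + 1) + 1 + 1 := by omega
    rw [this, Nat.factorial_succ, Nat.factorial_succ]; push_cast; ring
  have f3 : ((δ + γ + 2).factorial : ℂ) = (δ + γ + 2) * (δ + γ + 1).factorial := by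
    have : δ + γ + 2 = (δ + γ + 1) + 1 := by omega
    rw [this, Nat.factorial_succ]; push_cast; ring
  have f4 : ((γ + 2).factorial : ℂ) = (γ + 2) * ((γ + 1) * γ.factorial) := by
    rw [show γ + 2 = (γ + 1) + 1 by omega, Nat.factorial_succ, Nat.factorial_succ]
    push_cast; ring
  have f5 : ((γ + 1).factorial : ℂ) = (γ + 1) * γ.factorial := by
    rw [Nat.factorial_succ]; push_cast; ring
  have f6 : ((δ + 1).factorial : ℂ) = (δ + 1) * δ.factorial := by
    rw [Nat.factorial_succ]; push_cast; ring
  rw [f1, f2, f3, f4, f5, f6]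
  have h1 := fac_ne δ
  have h2 := fac_ne γ
  have h3 := fac_ne (δ + γ + 1)
  have n1 : ((γ : ℂ) + 1) ≠ 0 := by exact_mod_cast (by omega : (γ + 1 : ℕ) ≠ 0)
  have n2 : ((γ : ℂ) + 2) ≠ 0 := by exact_mod_cast (by omega : (γ + 2 : ℕ) ≠ 0)
  have n3 : ((δ : ℂ) + 1) ≠ 0 := by exact_mod_cast (by omega : (δ + 1 : ℕ) ≠ 0)
  have D1 : (δ.factorial : ℂ) * ((γ + 2) * ((γ + 1) * γ.factorial)) * ((γ + 1) * γ.factorial) ≠ 0 := by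
    apply mul_ne_zero (mul_ne_zero h1 (mul_ne_zero n2 (mul_ne_zero n1 h2))) (mul_ne_zero n1 h2)
  have D2 : (((δ:ℂ) + 1) * δ.factorial) * ((γ + 1) * γ.factorial) * (γ.factorial : ℂ) ≠ 0 := by
    apply mul_ne_zero (mul_ne_zero (mul_ne_zero n3 h1) (mul_ne_zero n1 h2)) h2
  have D3 : (((δ:ℂ) + 1) * δ.factorial) * ((γ + 2) * ((γ + 1) * γ.factorial)) * ((γ + 1) * γ.factorial) ≠ 0 := by
    apply mul_ne_zero (mul_ne_zero (mul_ne_zero n3 h1) (mul_ne_zero n2 (mul_ne_zero n1 h2))) (mul_ne_zero n1 h2)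
  rw [mul_div_assoc', div_add_div _ _ D1 D2, div_eq_div_iff (mul_ne_zero D1 D2) D3]
  push_cast
  ring

lemma sum_step (α : ℕ) (hα : 1 ≤ α) (G : ℕ → ℂ) :
    ∑ β ∈ Finset.Icc 1 α, (((α:ℂ) + β) * cc α β * G β + cc α β * G (β+1))
      = ∑ β ∈ Finset.Icc 1 (α+1), cc (α+1) β * G β := by
  rw [Finset.sum_add_distrib]
  have reindex : ∑ β ∈ Finset.Icc 1 α, cc α β * G (β+1)
      = ∑ β ∈ Finset.Icc 2 (α+1), cc α (β-1) * G β := by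
    have h : Finset.Icc 2 (α+1) = (Finset.Icc 1 α).map (addRightEmbedding 1) := by
      rw [Finset.map_add_right_Icc]
    rw [h, Finset.sum_map]
    refine Finset.sum_congr rfl fun β _ => ?_
    simp [addRightEmbedding]
  rw [reindex]
  have h1 : Finset.Icc 1 α = insert 1 (Finset.Icc 2 α) := by ext x; simp; omega
  have h2 : Finset.Icc 2 (α+1) = insert (α+1) (Finset.Icc 2 α) := by ext x; simp; omega
  have h3 : Finset.Icc 1 (α+1) = insert 1 (insert (α+1) (Finset.Icc 2 α)) := by
    ext x; simp; omega
  have m1 : (1:ℕ) ∉ Finset.Icc 2 α := by simp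
  have m2 : (α+1) ∉ Finset.Icc 2 α := by simp
  have m3 : (1:ℕ) ∉ insert (α+1) (Finset.Icc 2 α) := by simp; omega
  rw [h1, h2, h3, Finset.sum_insert m1, Finset.sum_insert m2, Finset.sum_insert m3,
    Finset.sum_insert m2]
  have mid : ∑ β ∈ Finset.Icc 2 α, ((α:ℂ)+β) * cc α β * G β
      + ∑ β ∈ Finset.Icc 2 α, cc α (β-1) * G β
      = ∑ β ∈ Finset.Icc 2 α, cc (α+1) β * G β := by
    rw [← Finset.sum_add_distrib]
    refine Finset.sum_congr rfl fun β hβ => ?_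
    simp only [Finset.mem_Icc] at hβ
    rw [← cc_rec α β hβ.1 hβ.2]; ring
  have e1 : ((α:ℂ) + 1) * cc α 1 = cc (α+1) 1 := by
    rw [cc_one, cc_one, Nat.factorial_succ]; push_cast; ring
  have e2 : cc α α = cc (α+1) (α+1) := by
    simp [cc_diag]
  simp only [Nat.add_sub_cancel]
  push_cast
  linear_combination G 1 * e1 + G (α+1) * e2 + mid

lemma main (a : ℂ) : ∀ α, 1 ≤ α → ∀ t : ℂ, t ≠ 0 →
    iteratedDeriv α (fun z : ℂ => Complex.exp (a / z)) t = FF a α t := by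
  intro α hα
  induction α, hα using Nat.le_induction with
  | base =>
    intro t ht
    rw [iteratedDeriv_one, (hasDerivAt_aux a t ht).deriv, FF]
    rw [Finset.Icc_self, Finset.sum_singleton, cc_diag]
    rw [show (-((1:ℕ):ℤ) - ((1:ℕ):ℤ)) = -((2:ℕ):ℤ) from by norm_num, zpow_neg, zpow_natCast]
    field_simp
  | succ α hα ih =>
    intro t ht
    rw [iteratedDeriv_succ]
    have hev : iteratedDeriv α (fun z : ℂ => Complex.exp (a / z)) =ᶠ[nhds t] FF a α := by
      filter_upwards [isOpen_compl_singleton.mem_nhds ht] with z hz using ih z hz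
    rw [hev.deriv_eq]
    set E := Complex.exp (a / t) with hE
    have hD : HasDerivAt (FF a α)
        ((-1:ℂ)^α * ∑ β ∈ Finset.Icc 1 α, (cc α β * a ^ β) *
          (((-(α:ℤ)-(β:ℤ) : ℤ) : ℂ) * t ^ (-(α:ℤ)-(β:ℤ) - 1) * E
            + t ^ (-(α:ℤ)-(β:ℤ)) * (E * (-(a / t^2))))) t := by
      have hFF : FF a α = fun z => (-1:ℂ)^α * ∑ β ∈ Finset.Icc 1 α,
          (cc α β * a ^ β) * (z ^ (-(α:ℤ)-(β:ℤ)) * Complex.exp (a / z)) := by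
        funext z; rw [FF]
        congr 1
        refine Finset.sum_congr rfl fun β _ => ?_
        ring
      rw [hFF]
      exact (HasDerivAt.fun_sum (fun β _ => (hasDerivAt_term a t ht _).const_mul _)).const_mul _
    rw [hD.deriv]
    -- algebraic identification
    have step1 : ∑ β ∈ Finset.Icc 1 α, (cc α β * a ^ β) *
          (((-(α:ℤ)-(β:ℤ) : ℤ) : ℂ) * t ^ (-(α:ℤ)-(β:ℤ) - 1) * E
            + t ^ (-(α:ℤ)-(β:ℤ)) * (E * (-(a / t^2))))
        = ∑ β ∈ Finset.Icc 1 α,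
          -((((α:ℂ) + β) * cc α β * (a ^ β * t ^ (-((α:ℤ)+1) - (β:ℤ)) * E)
            + cc α β * (a ^ (β+1) * t ^ (-((α:ℤ)+1) - ((β:ℤ)+1)) * E))) := by
      refine Finset.sum_congr rfl fun β _ => ?_
      rw [show (-(α:ℤ)-(β:ℤ) - 1) = (-((α:ℤ)+1) - (β:ℤ)) from by ring]
      have hm2 : t ^ (-((α:ℤ)+1) - ((β:ℤ)+1)) = t ^ (-(α:ℤ)-(β:ℤ)) / t^2 := by
        rw [show (-((α:ℤ)+1) - ((β:ℤ)+1)) = (-(α:ℤ)-(β:ℤ)) + (-2) from by ring,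
          zpow_add₀ ht, show ((-2:ℤ)) = -((2:ℕ):ℤ) from by norm_num, zpow_neg, zpow_natCast,
          div_eq_mul_inv]
      rw [hm2]
      push_cast
      field_simp
      ring
    rw [step1, Finset.sum_neg_distrib]
    have step2 := sum_step α hα
      (fun β : ℕ => a ^ β * t ^ (-((α:ℤ)+1) - (β:ℤ)) * E)
    push_cast at step2
    rw [show ((-1:ℂ)^α * -(∑ β ∈ Finset.Icc 1 α,
        (((α:ℂ) + β) * cc α β * (a ^ β * t ^ (-((α:ℤ)+1) - (β:ℤ)) * E)
          + cc α β * (a ^ (β+1) * t ^ (-((α:ℤ)+1) - ((β:ℤ)+1)) * E))))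
      = (-1:ℂ)^(α+1) * (∑ β ∈ Finset.Icc 1 α,
        (((α:ℂ) + β) * cc α β * (a ^ β * t ^ (-((α:ℤ)+1) - (β:ℤ)) * E)
          + cc α β * (a ^ (β+1) * t ^ (-((α:ℤ)+1) - ((β:ℤ)+1)) * E))) from by
        rw [pow_succ]; ring]
    rw [step2, FF]
    congr 1
    refine Finset.sum_congr rfl fun β _ => ?_
    push_cast
    ring

/-- `α`-th derivative of `t ↦ exp (a / t)` away from `0`. -/
theorem stmt8 (α : ℕ) (hα : 1 ≤ α) (a : ℂ) (t : ℂ) (ht : t ≠ 0) :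
    iteratedDeriv α (fun z : ℂ => Complex.exp (a / z)) t =
      (-1 : ℂ) ^ α * ∑ β ∈ Finset.Icc 1 α,
        ((α.factorial : ℂ) * ((α - 1).factorial : ℂ) /
            (((α - β).factorial : ℂ) * (β.factorial : ℂ) * ((β - 1).factorial : ℂ))) *
          a ^ β * t ^ (-(α : ℤ) - (β : ℤ)) * Complex.exp (a / t) := by
  have := main a α hα t ht
  rwa [FF] at this
end

section
/- Let Θ(t) = Σ_{l=1}^d (ε_{d+1}·t_1···t_d − ε_l·t_l^{-1})^2 for t ∈ (0,∞)^d, where each ε_l ∈ {1,-1}. If t ∈ (0,∞)^d lies outside the hypercube [1/4, 4]^d, then max over l of |ε_{d+1}·t_1···t_d − ε_l·t_l^{-1}| ≥ 1/4; consequently Θ(t) ≥ 1/16. -/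
/-- outside the hypercube `[1/4,4]^d` one has
`max_l |ε_{d+1} t_1⋯t_d − ε_l t_l⁻¹| ≥ 1/4`, hence `Θ(t) ≥ 1/16`. -/
theorem stmt15 (d : ℕ) (ε : Fin d → ℝ) (εn : ℝ)
    (hε : ∀ l, ε l = 1 ∨ ε l = -1) (hεn : εn = 1 ∨ εn = -1)
    (t : Fin d → ℝ) (ht : ∀ l, 0 < t l)
    (hout : ∃ l, t l ∉ Set.Icc (1 / 4 : ℝ) 4) :
    (∃ l, (1 / 4 : ℝ) ≤ |εn * ∏ k, t k - ε l * (t l)⁻¹|) ∧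
      (1 / 16 : ℝ) ≤ ∑ l, (εn * ∏ k, t k - ε l * (t l)⁻¹) ^ 2 := by
  set P : ℝ := ∏ k, t k with hPdef
  have hP : 0 < P := Finset.prod_pos (fun i _ => ht i)
  -- key: some index m has |P - (t m)⁻¹| ≥ 1/4
  have key : ∃ m, (1 / 4 : ℝ) ≤ |P - (t m)⁻¹| := by
    by_contra h
    push_neg at h
    obtain ⟨l, hl⟩ := hout
    rw [Set.mem_Icc] at hl
    push_neg at hl
    have hinvl : (0:ℝ) < (t l)⁻¹ := inv_pos.mpr (ht l)
    have hcl : t l * (t l)⁻¹ = 1 := mul_inv_cancel₀ (ne_of_gt (ht l))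
    have hl' := h l
    rw [abs_lt] at hl'
    by_cases hc : (1/4 : ℝ) ≤ t l
    · -- then 4 < t l, so (t l)⁻¹ < 1/4 and P < 1/2
      have h4 : 4 < t l := hl hc
      have hinvs : (t l)⁻¹ < 1/4 := by nlinarith
      have hPs : P < 1/2 := by nlinarith
      have hall : ∀ m, (1:ℝ) ≤ t m := by
        intro m
        have hm := h m
        rw [abs_lt] at hm
        have hcm : t m * (t m)⁻¹ = 1 := mul_inv_cancel₀ (ne_of_gt (ht m))
        have : (t m)⁻¹ < 3/4 := by linarith
        nlinarith [ht m]
      have : (1:ℝ) ≤ P := by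
        rw [hPdef]
        calc (1:ℝ) = ∏ _k : Fin d, (1:ℝ) := by simp
          _ ≤ ∏ k, t k :=
            Finset.prod_le_prod (fun i _ => by norm_num) (fun i _ => hall i)
      linarith
    · -- then t l < 1/4, so (t l)⁻¹ > 4 and P > 15/4
      push_neg at hc
      have hinvb : 4 < (t l)⁻¹ := by nlinarith
      have hPb : 15/4 < P := by linarith
      have hall : ∀ m, t m ≤ 1 := by
        intro m
        have hm := h m
        rw [abs_lt] at hm
        have hcm : t m * (t m)⁻¹ = 1 := mul_inv_cancel₀ (ne_of_gt (ht m))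
        have : 7/2 < (t m)⁻¹ := by linarith
        nlinarith [ht m]
      have : P ≤ 1 := by
        rw [hPdef]
        exact Finset.prod_le_one (fun i _ => le_of_lt (ht i)) (fun i _ => hall i)
      linarith
  obtain ⟨m, hm⟩ := key
  have e1 : |εn * P| = P := by
    rcases hεn with h | h <;> rw [h] <;>
      simp [abs_of_pos hP]
  have e2 : |ε m * (t m)⁻¹| = (t m)⁻¹ := by
    have : (0:ℝ) < (t m)⁻¹ := inv_pos.mpr (ht m)
    rcases hε m with h | h <;> rw [h] <;>
      simp [abs_of_pos this]
  have hmain : (1/4 : ℝ) ≤ |εn * P - ε m * (t m)⁻¹| := by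
    calc (1/4 : ℝ) ≤ |P - (t m)⁻¹| := hm
      _ = |(|εn * P| - |ε m * (t m)⁻¹|)| := by rw [e1, e2]
      _ ≤ |εn * P - ε m * (t m)⁻¹| := abs_abs_sub_abs_le_abs_sub _ _
  refine ⟨⟨m, hmain⟩, ?_⟩
  have hsq : (1/16 : ℝ) ≤ (εn * P - ε m * (t m)⁻¹) ^ 2 := by
    have h1 : ((1:ℝ)/4) ^ 2 ≤ |εn * P - ε m * (t m)⁻¹| ^ 2 :=
      pow_le_pow_left₀ (by norm_num) hmain 2
    rw [sq_abs] at h1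
    linarith [h1]
  calc (1/16 : ℝ) ≤ (εn * P - ε m * (t m)⁻¹) ^ 2 := hsq
    _ ≤ ∑ l, (εn * P - ε l * (t l)⁻¹) ^ 2 :=
      Finset.single_le_sum (f := fun l => (εn * P - ε l * (t l)⁻¹) ^ 2)
        (fun i _ => sq_nonneg _) (Finset.mem_univ m)
end

section
/- For every complex number ν with |Re ν| < 1 and every x > 0, one has ±πi·e^{±πiν/2}·H^{(1,2)}_ν(2x) = ∫_0^∞ t^{ν-1} e^{±ix(t + 1/t)} dt, where H^{(1)}_ν and H^{(2)}_ν are the Hankel functions, and the integral converges conditionally. -/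
open Complex Filter intervalIntegral Real Set


/-- for `|Re ν| < 1`, `x > 0` and either sign `σ = ±1`, if `H` denotes the
Hankel function value `H^{(1,2)}_ν(2x)` — characterized by the (conditionally convergent)
integral representation
`∫_0^∞ e^{±i(2x)cosh r} cosh(νr) dr = ±(πi/2)·e^{±πiν/2}·H` — then
`±πi·e^{±πiν/2}·H = ∫_0^∞ t^{ν-1} e^{±ix(t+1/t)} dt`, the right-hand integral being
improper (conditionally convergent) at both `0` and `∞`. -/
theorem stmt17 (ν : ℂ) (hν : |ν.re| < 1) (x : ℝ) (hx : 0 < x)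
    (σ : ℂ) (hσ : σ = 1 ∨ σ = -1) (H : ℂ)
    (hH : Filter.Tendsto
      (fun R : ℝ => ∫ r in (0 : ℝ)..R,
        Complex.exp (σ * Complex.I * (2 * x) * Real.cosh r) * Complex.cosh (ν * r))
      Filter.atTop
      (nhds (σ * (Real.pi * Complex.I) * Complex.exp (σ * Real.pi * Complex.I * ν / 2) * H / 2))) :
    Filter.Tendsto
      (fun R : ℝ => ∫ t in R⁻¹..R,
        (t : ℂ) ^ (ν - 1) * Complex.exp (σ * Complex.I * x * (t + (t : ℂ)⁻¹)))
      Filter.atTop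
      (nhds (σ * Real.pi * Complex.I * Complex.exp (σ * Real.pi * Complex.I * ν / 2) * H)) := by
  set g : ℝ → ℂ := fun r =>
    Complex.exp (σ * Complex.I * (2 * x) * Real.cosh r) * Complex.cosh (ν * r) with hg
  set h : ℝ → ℂ := fun r =>
    Complex.exp (σ * Complex.I * (2 * x) * Real.cosh r) * Complex.exp (ν * r) with hhdef
  have hhc : Continuous h := by fun_prop
  -- key identity for R > 1
  have key : ∀ R : ℝ, 1 < R →
      (∫ t in R⁻¹..R, (t : ℂ) ^ (ν - 1) * Complex.exp (σ * Complex.I * x * (t + (t : ℂ)⁻¹)))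
      = 2 * ∫ r in (0:ℝ)..(Real.log R), g r := by
    intro R hR
    have hR0 : (0:ℝ) < R := lt_trans one_pos hR
    set f : ℝ → ℂ := fun t =>
      (t : ℂ) ^ (ν - 1) * Complex.exp (σ * Complex.I * x * (t + (t : ℂ)⁻¹)) with hf
    set L := Real.log R with hL
    have hsub : (∫ r in (-L)..L, Real.exp r • f (Real.exp r)) = ∫ t in R⁻¹..R, f t := by
      have := intervalIntegral.integral_comp_smul_deriv' (a := -L) (b := L)
        (f := Real.exp) (f' := Real.exp) (g := f)
        (fun r _ => Real.hasDerivAt_exp r) Real.continuous_exp.continuousOn ?_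
      · simp only [Function.comp] at this
        rw [this, Real.exp_neg, Real.exp_log hR0]
      · apply ContinuousOn.mul
        · intro t ht
          obtain ⟨r, _, rfl⟩ := ht
          exact (Complex.continuousAt_ofReal_cpow_const _ _
            (Or.inr (by exact_mod_cast (Real.exp_pos r).ne'))).continuousWithinAt
        · apply Complex.continuous_exp.comp_continuousOn
          apply ContinuousOn.mul continuousOn_const
          apply ContinuousOn.add Complex.continuous_ofReal.continuousOn
          apply ContinuousOn.inv₀ Complex.continuous_ofReal.continuousOn
          rintro t ⟨r, _, rfl⟩
          exact_mod_cast (Real.exp_pos r).ne'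
    have hpt : ∀ r : ℝ, Real.exp r • f (Real.exp r) = h r := by
      intro r
      have he : (0:ℝ) < Real.exp r := Real.exp_pos r
      have h1 : ((Real.exp r : ℝ) : ℂ) ^ (ν - 1) = Complex.exp (Complex.log (Real.exp r) * (ν - 1)) :=
        Complex.cpow_def_of_ne_zero (by exact_mod_cast he.ne') _
      have h2 : Complex.log ((Real.exp r : ℝ) : ℂ) = (r : ℂ) := by
        rw [← Complex.ofReal_log he.le, Real.log_exp]
      have h3 : ((Real.exp r : ℝ) : ℂ)⁻¹ = ((Real.exp (-r) : ℝ) : ℂ) := by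
        rw [Real.exp_neg]; push_cast; ring
      have h4 : ((Real.exp r : ℝ) : ℂ) + ((Real.exp (-r) : ℝ) : ℂ)
          = ((2 * Real.cosh r : ℝ) : ℂ) := by push_cast [Real.cosh_eq]; ring
      simp only [hf, hhdef, smul_eq_mul, h1, h2, h3, h4]
      rw [Complex.real_smul, Complex.ofReal_exp]
      simp only [← Complex.exp_add]
      congr 1
      push_cast
      ring
    have hsym : (∫ r in (-L)..L, h r) = 2 * ∫ r in (0:ℝ)..L, g r := by
      have hadd : (∫ r in (-L)..L, h r)
          = (∫ r in (-L)..(0:ℝ), h r) + ∫ r in (0:ℝ)..L, h r :=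
        (intervalIntegral.integral_add_adjacent_intervals
          (hhc.intervalIntegrable _ _) (hhc.intervalIntegrable _ _)).symm
      have hneg : (∫ r in (-L)..(0:ℝ), h r) = ∫ r in (0:ℝ)..L, h (-r) := by
        rw [intervalIntegral.integral_comp_neg (a := 0) (b := L) h, neg_zero]
      have hsum : ∀ r : ℝ, h (-r) + h r = 2 * g r := by
        intro r
        simp only [hhdef, hg, Real.cosh_neg, Complex.ofReal_neg, mul_neg]
        have := Complex.two_cosh (ν * r)
        linear_combination (-Complex.exp (σ * Complex.I * (2 * x) * Real.cosh r)) * this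
      have hint : IntervalIntegrable (fun r => h (-r)) MeasureTheory.volume 0 L :=
        (hhc.comp continuous_neg).intervalIntegrable _ _
      rw [hadd, hneg, ← intervalIntegral.integral_add hint (hhc.intervalIntegrable _ _)]
      simp only [hsum]
      rw [intervalIntegral.integral_const_mul]
    calc (∫ t in R⁻¹..R, f t) = ∫ r in (-L)..L, Real.exp r • f (Real.exp r) := hsub.symm
      _ = ∫ r in (-L)..L, h r := by simp only [hpt]
      _ = 2 * ∫ r in (0:ℝ)..L, g r := hsym
  have h2 : Filter.Tendsto (fun R : ℝ => 2 * ∫ r in (0:ℝ)..(Real.log R), g r)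
      Filter.atTop (nhds (σ * Real.pi * Complex.I *
        Complex.exp (σ * Real.pi * Complex.I * ν / 2) * H)) := by
    have := (hH.comp Real.tendsto_log_atTop).const_mul (2:ℂ)
    convert this using 2
    · rfl
    ring
  exact h2.congr' (by filter_upwards [eventually_gt_atTop 1] with R hR using (key R hR).symm)
end

section
/- For all nonnegative integers m and complex numbers ν, the combinatorial identity (-1)^m·(1/2 − ν)_m·(1/2 + ν)_m / m! = (1−ν)_{2m}/m! + Σ_{r=1}^{2m} [(-1)^r (2m+2r)! / (4^r (m+r)! r!)] · Σ_{α=0}^{2m−r} C(2m−α−1, r−1) · (1−ν)_α / α! holds, where (ν)_α = ν(ν+1)···(ν+α−1) is the rising factorial (Pochhammer symbol). -/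
open Finset Polynomial

noncomputable def Cg (x : ℂ) (k : ℕ) : ℂ := (∏ i ∈ Finset.range k, (x - i)) / k.factorial

lemma descPoch_smeval (x : ℂ) (k : ℕ) :
    Polynomial.smeval (descPochhammer ℤ k) x = ∏ i ∈ Finset.range k, (x - i) := by
  induction k with
  | zero => simp [descPochhammer_zero, Polynomial.smeval_one]
  | succ n ih =>
    rw [descPochhammer_succ_right, Polynomial.smeval_mul, ih, prod_range_succ,
      Polynomial.smeval_sub, Polynomial.smeval_X, Polynomial.smeval_natCast]
    ring

lemma Rchoose_eq (x : ℂ) (k : ℕ) : Ring.choose x k = Cg x k := by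
  have h := Ring.descPochhammer_eq_factorial_smul_choose x k
  rw [descPoch_smeval, nsmul_eq_mul] at h
  have hf : (k.factorial : ℂ) ≠ 0 := Nat.cast_ne_zero.2 k.factorial_ne_zero
  unfold Cg
  rw [h]
  rw [mul_div_cancel_left₀ _ hf]

lemma vander (a b : ℂ) (n : ℕ) :
    ∑ r ∈ Finset.range (n+1), Cg a r * Cg b (n - r) = Cg (a+b) n := by
  have h := Ring.add_choose_eq (r := a) (s := b) n (Commute.all a b)
  rw [Finset.Nat.sum_antidiagonal_eq_sum_range_succ_mk] at h
  simpa [Rchoose_eq] using h.symm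

lemma Cg_zero (x : ℂ) : Cg x 0 = 1 := by simp [Cg]

lemma prod_neg_flip (n : ℕ) (f : ℕ → ℂ) :
    ∏ i ∈ Finset.range n, (-(f i)) = (-1 : ℂ) ^ n * ∏ i ∈ Finset.range n, f i := by
  induction n with
  | zero => simp
  | succ k ih => rw [prod_range_succ, prod_range_succ, ih]; ring

lemma prod_reflect (x : ℂ) (n : ℕ) :
    ∏ i ∈ Finset.range n, (x - ((n : ℂ) - 1 - i)) = ∏ i ∈ Finset.range n, (x - i) := by
  rw [← Finset.prod_range_reflect (fun i => (x - (i : ℂ))) n]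
  refine Finset.prod_congr rfl fun i hi => ?_
  have hi' : i + 1 ≤ n := Finset.mem_range.1 hi
  have : ((n - 1 - i : ℕ) : ℂ) = (n : ℂ) - 1 - i := by
    have h1 : 1 + i ≤ n := by omega
    rw [Nat.sub_sub]
    push_cast [Nat.cast_sub h1]
    ring
  rw [this]

lemma Cg_reflect (x : ℂ) (n : ℕ) :
    Cg x n = (-1 : ℂ) ^ n * Cg ((n : ℂ) - 1 - x) n := by
  unfold Cg
  rw [← prod_reflect ((n : ℂ) - 1 - x) n]
  have : ∏ i ∈ Finset.range n, ((n:ℂ) - 1 - x - ((n : ℂ) - 1 - i)) =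
      ∏ i ∈ Finset.range n, (-(x - i)) := by
    refine Finset.prod_congr rfl fun i _ => by ring
  rw [this, prod_neg_flip]
  have hf : (n.factorial : ℂ) ≠ 0 := Nat.cast_ne_zero.2 n.factorial_ne_zero
  field_simp
  rw [← pow_mul, mul_comm n 2, pow_mul]
  norm_num

lemma cast_choose (n k : ℕ) : ((n.choose k : ℕ) : ℂ) = Cg (n : ℂ) k := by
  rw [← Rchoose_eq, Ring.choose_natCast]

lemma cast_choose_neg (r j : ℕ) : (((r + j).choose j : ℕ) : ℂ) = (-1 : ℂ)^j * Cg (-(r:ℂ)-1) j := by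
  rw [cast_choose, Cg_reflect]
  have h : ((j:ℂ) - 1 - ((r + j : ℕ) : ℂ)) = -(r:ℂ)-1 := by push_cast; ring
  rw [h]

lemma fact_ratio (m r : ℕ) :
    ((2*m+2*r).factorial : ℂ) * (m.factorial : ℂ) =
    (∏ i ∈ Finset.range r, ((m:ℂ) + 1/2 + i)) *
      ((4:ℂ)^r * ((m+r).factorial : ℂ) * ((2*m).factorial : ℂ)) := by
  induction r with
  | zero => norm_num; ring
  | succ r ih =>
    have e1 : 2*m+2*(r+1) = (2*m+2*r+1)+1 := by ring
    have e2 : m+(r+1) = (m+r)+1 := by ring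
    rw [e1, e2, Nat.factorial_succ, Nat.factorial_succ ((m+r)), Nat.factorial_succ (2*m+2*r),
      Finset.prod_range_succ]
    push_cast
    push_cast at ih
    linear_combination ((2*(m:ℂ)+2*r+2)*(2*(m:ℂ)+2*r+1)) * ih

lemma poch_to_Cg (ν : ℂ) (α : ℕ) :
    ∏ i ∈ Finset.range α, (1 - ν + i) = (-1:ℂ)^α * ∏ i ∈ Finset.range α, ((ν - 1) - i) := by
  rw [← prod_neg_flip]
  exact Finset.prod_congr rfl fun i _ => by ring

lemma inner_sum_eq (m r : ℕ) (ν : ℂ) (hr : 1 ≤ r) (hr2 : r ≤ 2*m) :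
    ∑ α ∈ Finset.range (2 * m - r + 1),
      ((2 * m - α - 1).choose (r - 1) : ℂ) *
        (∏ i ∈ Finset.range α, (1 - ν + i)) / (α.factorial : ℂ) =
    Cg ((2*m : ℕ) - ν) (2*m - r) := by
  set N := 2*m - r with hN
  have hstep : ∀ α ∈ Finset.range (N + 1),
      ((2 * m - α - 1).choose (r - 1) : ℂ) *
        (∏ i ∈ Finset.range α, (1 - ν + i)) / (α.factorial : ℂ) =
      (-1:ℂ)^N * (Cg (ν - 1) α * Cg (-(r:ℂ)) (N - α)) := by
    intro α hα
    have hα' : α ≤ N := by simpa using Nat.lt_succ_iff.1 (Finset.mem_range.1 hα)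
    -- choose part
    have hc1 : (2 * m - α - 1).choose (r - 1) = ((r-1) + (N - α)).choose (N - α) := by
      have h1 : (r-1) + (N - α) = 2*m - α - 1 := by omega
      rw [h1, ← Nat.choose_symm (by omega : r - 1 ≤ 2*m - α - 1)]
      congr 1
      omega
    have hc2 : (((r-1) + (N - α)).choose (N - α) : ℂ) = (-1:ℂ)^(N-α) * Cg (-(r:ℂ)) (N - α) := by
      rw [cast_choose_neg (r-1) (N-α)]
      congr 2
      push_cast [Nat.cast_sub hr]
      ring
    have hp : (∏ i ∈ Finset.range α, (1 - ν + i)) / (α.factorial : ℂ) =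
        (-1:ℂ)^α * Cg (ν - 1) α := by
      rw [poch_to_Cg, Cg, mul_div_assoc]
    rw [mul_div_assoc, hc1, hc2, hp]
    have hsign : (-1:ℂ)^(N-α) * (-1:ℂ)^α = (-1:ℂ)^N := by
      rw [← pow_add]
      congr 1
      omega
    calc (-1:ℂ)^(N-α) * Cg (-(r:ℂ)) (N - α) * ((-1:ℂ)^α * Cg (ν - 1) α)
        = ((-1:ℂ)^(N-α) * (-1:ℂ)^α) * (Cg (ν - 1) α * Cg (-(r:ℂ)) (N - α)) := by ring
      _ = (-1:ℂ)^N * (Cg (ν - 1) α * Cg (-(r:ℂ)) (N - α)) := by rw [hsign]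
  rw [Finset.sum_congr rfl hstep, ← Finset.mul_sum, vander (ν - 1) (-(r:ℂ)) N]
  rw [Cg_reflect (ν - 1 + -(r:ℂ)) N]
  have harg : ((N:ℂ) - 1 - (ν - 1 + -(r:ℂ))) = (2*m : ℕ) - ν := by
    have : ((N:ℕ):ℂ) = (2*m : ℂ) - r := by
      rw [hN]
      push_cast [Nat.cast_sub hr2]
      ring
    rw [this]
    push_cast
    ring
  rw [harg, ← mul_assoc, ← mul_pow]
  norm_num

lemma coeff_eq (m r : ℕ) :
    (-1 : ℂ) ^ r * ((2 * m + 2 * r).factorial : ℂ) /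
      ((4 : ℂ) ^ r * (((m + r).factorial : ℕ) : ℂ) * ((r.factorial : ℕ) : ℂ)) =
    (((2*m).factorial : ℂ) / (m.factorial : ℂ)) * Cg (-(m:ℂ) - 1/2) r := by
  have hne : ∀ n : ℕ, ((n.factorial : ℕ) : ℂ) ≠ 0 := fun n => Nat.cast_ne_zero.2 n.factorial_ne_zero
  have h4 : (4:ℂ)^r ≠ 0 := pow_ne_zero _ (by norm_num)
  have hprod : ∏ i ∈ Finset.range r, (-(m:ℂ) - 1/2 - i) =
      (-1:ℂ)^r * ∏ i ∈ Finset.range r, ((m:ℂ) + 1/2 + i) := by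
    rw [← prod_neg_flip]
    exact Finset.prod_congr rfl fun i _ => by ring
  rw [Cg, hprod]
  have hfr := fact_ratio m r
  rw [div_mul_eq_mul_div, mul_div_assoc', div_div]
  rw [div_eq_div_iff (mul_ne_zero (mul_ne_zero h4 (hne (m+r))) (hne r))
    (mul_ne_zero (hne r) (hne m))]
  linear_combination ((-1:ℂ)^r * (r.factorial : ℂ)) * hfr

/-- combinatorial identity for the Pochhammer (rising factorial) symbols. -/
theorem stmt19 (m : ℕ) (ν : ℂ) :
    (-1 : ℂ) ^ m * (∏ i ∈ Finset.range m, (1 / 2 - ν + i)) *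
        (∏ i ∈ Finset.range m, (1 / 2 + ν + i)) / (m.factorial : ℂ) =
      (∏ i ∈ Finset.range (2 * m), (1 - ν + i)) / (m.factorial : ℂ) +
        ∑ r ∈ Finset.Icc 1 (2 * m),
          ((-1 : ℂ) ^ r * ((2 * m + 2 * r).factorial : ℂ) /
              ((4 : ℂ) ^ r * ((m + r).factorial : ℂ) * (r.factorial : ℂ))) *
            ∑ α ∈ Finset.range (2 * m - r + 1),
              ((2 * m - α - 1).choose (r - 1) : ℂ) *
                (∏ i ∈ Finset.range α, (1 - ν + i)) / (α.factorial : ℂ) := by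
  have hne : ∀ n : ℕ, ((n.factorial : ℕ) : ℂ) ≠ 0 := fun n => Nat.cast_ne_zero.2 n.factorial_ne_zero
  set K : ℂ := ((2*m).factorial : ℂ) / (m.factorial : ℂ) with hK
  set a : ℂ := -(m:ℂ) - 1/2 with ha
  set b : ℂ := ((2*m : ℕ) : ℂ) - ν with hb
  -- each summand
  have hterm : ∀ r ∈ Finset.Icc 1 (2*m),
      ((-1 : ℂ) ^ r * ((2 * m + 2 * r).factorial : ℂ) /
          ((4 : ℂ) ^ r * ((m + r).factorial : ℂ) * (r.factorial : ℂ))) *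
        ∑ α ∈ Finset.range (2 * m - r + 1),
          ((2 * m - α - 1).choose (r - 1) : ℂ) *
            (∏ i ∈ Finset.range α, (1 - ν + i)) / (α.factorial : ℂ) =
      K * (Cg a r * Cg b (2*m - r)) := by
    intro r hr
    obtain ⟨hr1, hr2⟩ := Finset.mem_Icc.1 hr
    rw [inner_sum_eq m r ν hr1 hr2, coeff_eq m r]
    ring
  -- the r = 0 term
  have hT0 : (∏ i ∈ Finset.range (2 * m), (1 - ν + i)) / (m.factorial : ℂ) =
      K * (Cg a 0 * Cg b (2*m - 0)) := by
    rw [Cg_zero, Nat.sub_zero, Cg]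
    have hp : ∏ i ∈ Finset.range (2*m), (b - (((2*m:ℕ):ℂ) - 1 - i)) =
        ∏ i ∈ Finset.range (2*m), (1 - ν + i) := by
      refine Finset.prod_congr rfl fun i _ => ?_
      rw [hb]
      push_cast
      ring
    rw [← prod_reflect b (2*m), hp, hK, one_mul, div_mul_div_comm,
      div_eq_div_iff (hne m) (mul_ne_zero (hne m) (hne (2*m)))]
    ring
  -- assemble the sum
  rw [Finset.sum_congr rfl hterm, hT0]
  have hsum : K * (Cg a 0 * Cg b (2*m - 0)) + ∑ r ∈ Finset.Icc 1 (2*m), K * (Cg a r * Cg b (2*m - r)) =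
      ∑ r ∈ Finset.range (2*m+1), K * (Cg a r * Cg b (2*m - r)) := by
    rw [Finset.sum_range_succ' (fun r => K * (Cg a r * Cg b (2*m - r))) (2*m),
      ← Finset.Ico_add_one_right_eq_Icc, Finset.sum_Ico_eq_sum_range]
    rw [add_comm]
    congr 1
    exact Finset.sum_congr (by norm_num) fun i _ => by rw [add_comm 1 i]
  rw [hsum]
  have hv : ∑ r ∈ Finset.range (2*m+1), K * (Cg a r * Cg b (2*m - r)) = K * Cg (a + b) (2*m) := by
    rw [← vander a b (2*m), Finset.mul_sum]
  rw [hv]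
  -- left-hand side product manipulation
  have hL : (-1 : ℂ) ^ m * (∏ i ∈ Finset.range m, (1 / 2 - ν + i)) *
      (∏ i ∈ Finset.range m, (1 / 2 + ν + i)) =
      ∏ i ∈ Finset.range (2*m), (a + b - i) := by
    have e1 : (-1:ℂ)^m * ∏ i ∈ Finset.range m, (1/2 - ν + i) =
        ∏ i ∈ Finset.range m, (ν - 1/2 - i) := by
      have : ∏ i ∈ Finset.range m, ((1:ℂ)/2 - ν + i) =
          ∏ i ∈ Finset.range m, (-(ν - 1/2 - i)) :=
        Finset.prod_congr rfl fun i _ => by ring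
      rw [this, prod_neg_flip, ← mul_assoc, ← mul_pow]
      norm_num
    have e2 : ∏ i ∈ Finset.range m, (ν - 1/2 - (i:ℂ)) =
        ∏ i ∈ Finset.range m, (ν + 1/2 - (m:ℂ) + i) := by
      rw [← prod_reflect (ν - 1/2) m]
      exact Finset.prod_congr rfl fun i _ => by ring
    have e3 : ∏ i ∈ Finset.range (2*m), (ν + 1/2 - (m:ℂ) + i) =
        (∏ i ∈ Finset.range m, (ν + 1/2 - (m:ℂ) + i)) *
          ∏ i ∈ Finset.range m, ((1:ℂ)/2 + ν + i) := by
      rw [two_mul, Finset.prod_range_add]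
      congr 1
      refine Finset.prod_congr rfl fun i _ => ?_
      push_cast
      ring
    have e4 : ∏ i ∈ Finset.range (2*m), (a + b - i) =
        ∏ i ∈ Finset.range (2*m), (ν + 1/2 - (m:ℂ) + i) := by
      have h1 : ∏ i ∈ Finset.range (2*m), (a + b - i) =
          ∏ i ∈ Finset.range (2*m), (-(ν + 1/2 - (m:ℂ) + i)) := by
        refine Finset.prod_congr rfl fun i _ => ?_
        rw [ha, hb]
        push_cast
        ring
      rw [h1, prod_neg_flip, pow_mul]
      norm_num
    rw [e1, e2, e4, e3]
  rw [hL, Cg, hK, div_mul_div_comm, div_eq_div_iff (hne m) (mul_ne_zero (hne m) (hne (2*m)))]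
  ring
end
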